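/- Derivative of the mean divergence under exponential tilting: Let Δ : ℕ → [0,∞) and β* ≥ 0 be such that ∑_j exp(−β·Δ_j) < ∞ for every β > β*. Define Z(β) := ∑_j exp(−β·Δ_j) and Φ(β) := (∑_j Δ_j·exp(−β·Δ_j))/Z(β). Then for every β > β*, Φ is differentiable at β and Φ′(β) = −( ∑_j Δ_j²·exp(−β·Δ_j)/Z(β) − Φ(β)² ), i.e. Φ′(β) equals minus the variance of Δ under the Gibbs distribution with parameter β. -/

import Mathlib

open Real

lemma summable_pow_mul_exp (Δ : ℕ → ℝ) (hΔ : ∀ j, 0 ≤ Δ j) (βs : ℝ)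
    (hsum : ∀ β > βs, Summable fun j => Real.exp (-β * Δ j)) (k : ℕ) (hk : 0 < k)
    {c : ℝ} (hc : βs < c) : Summable (fun j => Δ j ^ k * Real.exp (-c * Δ j)) := by
  set c' := (βs + c) / 2 with hc'def
  have hc1 : βs < c' := by simp only [hc'def]; linarith
  have hc2 : c' < c := by simp only [hc'def]; linarith
  set ε := (c - c') / k with hεdef
  have hkpos : (0:ℝ) < k := Nat.cast_pos.mpr hk
  have hε : 0 < ε := div_pos (by linarith) hkpos
  have hkε : (k : ℝ) * ε = c - c' := by
    rw [hεdef]; field_simp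
  apply Summable.of_nonneg_of_le
    (fun j => mul_nonneg (pow_nonneg (hΔ j) k) (Real.exp_pos _).le)
    (fun j => ?_) (((hsum c' hc1)).mul_left (ε⁻¹ ^ k))
  have h0 : ε * Δ j ≤ Real.exp (ε * Δ j) := by
    have h1 := Real.add_one_le_exp (ε * Δ j)
    nlinarith [mul_nonneg hε.le (hΔ j)]
  have h1 : Δ j ≤ ε⁻¹ * Real.exp (ε * Δ j) := by
    calc Δ j = ε⁻¹ * (ε * Δ j) := by field_simp
    _ ≤ ε⁻¹ * Real.exp (ε * Δ j) :=
        mul_le_mul_of_nonneg_left h0 (inv_nonneg.mpr hε.le)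
  have h2 : Δ j ^ k ≤ (ε⁻¹ * Real.exp (ε * Δ j)) ^ k := pow_le_pow_left₀ (hΔ j) h1 k
  calc Δ j ^ k * Real.exp (-c * Δ j)
      ≤ (ε⁻¹ * Real.exp (ε * Δ j)) ^ k * Real.exp (-c * Δ j) :=
        mul_le_mul_of_nonneg_right h2 (Real.exp_pos _).le
    _ = ε⁻¹ ^ k * Real.exp (-c' * Δ j) := by
        rw [mul_pow, ← Real.exp_nat_mul, mul_assoc, ← Real.exp_add]
        congr 2
        linear_combination (Δ j) * hkε

/-- **Derivative of the mean divergence under exponential tilting.**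
If `Z(β) = ∑ exp(-β Δ_j) < ∞` for all `β > β*`, then the mean divergence
`Φ(β) = (∑ Δ_j exp(-β Δ_j))/Z(β)` is differentiable on `(β*, ∞)` with
`Φ'(β) = -((∑ Δ_j² exp(-β Δ_j))/Z(β) - Φ(β)²)`, i.e. minus the variance of
`Δ` under the Gibbs distribution with parameter `β`. -/
theorem mean_divergence_deriv
    (Δ : ℕ → ℝ) (hΔ : ∀ j, 0 ≤ Δ j) (βs : ℝ) (hβs : 0 ≤ βs)
    (hsum : ∀ β > βs, Summable fun j => Real.exp (-β * Δ j)) :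
    ∀ β > βs,
      HasDerivAt
        (fun b : ℝ =>
          (∑' j, Δ j * Real.exp (-b * Δ j)) / (∑' j, Real.exp (-b * Δ j)))
        (-((∑' j, (Δ j) ^ 2 * Real.exp (-β * Δ j)) / (∑' j, Real.exp (-β * Δ j))
            - ((∑' j, Δ j * Real.exp (-β * Δ j)) / (∑' j, Real.exp (-β * Δ j))) ^ 2))
        β := by
  intro β hβ
  set c := (βs + β) / 2 with hcdef
  have hc1 : βs < c := by simp only [hcdef]; linarith
  have hc2 : c < β := by simp only [hcdef]; linarith
  have htopen : IsOpen (Set.Ioi c) := isOpen_Ioi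
  have htconn : IsPreconnected (Set.Ioi c) := isPreconnected_Ioi
  have hβt : β ∈ Set.Ioi c := hc2
  -- derivative of each term
  have hterm : ∀ (j : ℕ) (y : ℝ),
      HasDerivAt (fun b => Real.exp (-b * Δ j)) (-(Δ j * Real.exp (-y * Δ j))) y := by
    intro j y
    have h := ((hasDerivAt_id y).neg.mul_const (Δ j)).exp
    refine h.congr_deriv ?_
    simp only [Pi.neg_apply, id_eq]
    ring
  have hterm2 : ∀ (j : ℕ) (y : ℝ),
      HasDerivAt (fun b => Δ j * Real.exp (-b * Δ j))
        (-(Δ j ^ 2 * Real.exp (-y * Δ j))) y := by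
    intro j y
    have h := (hterm j y).const_mul (Δ j)
    refine h.congr_deriv ?_
    ring
  -- monotonicity bound on Ioi c
  have hbound : ∀ (j : ℕ) (y : ℝ), y ∈ Set.Ioi c →
      Real.exp (-y * Δ j) ≤ Real.exp (-c * Δ j) := by
    intro j y hy
    apply Real.exp_le_exp.mpr
    have : c ≤ y := le_of_lt hy
    nlinarith [hΔ j]
  -- derivative of Z
  have hZ : HasDerivAt (fun b : ℝ => ∑' j, Real.exp (-b * Δ j))
      (∑' j, -(Δ j * Real.exp (-β * Δ j))) β := by
    apply hasDerivAt_tsum_of_isPreconnected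
      (summable_pow_mul_exp Δ hΔ βs hsum 1 one_pos hc1) htopen htconn
      (fun j y _ => hterm j y) ?_ hβt (hsum β hβ) hβt
    intro j y hy
    rw [norm_neg, norm_mul, Real.norm_eq_abs, Real.norm_eq_abs,
      abs_of_nonneg (hΔ j), abs_of_nonneg (Real.exp_pos _).le, pow_one]
    exact mul_le_mul_of_nonneg_left (hbound j y hy) (hΔ j)
  -- derivative of N
  have hN : HasDerivAt (fun b : ℝ => ∑' j, Δ j * Real.exp (-b * Δ j))
      (∑' j, -(Δ j ^ 2 * Real.exp (-β * Δ j))) β := by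
    apply hasDerivAt_tsum_of_isPreconnected
      (summable_pow_mul_exp Δ hΔ βs hsum 2 two_pos hc1) htopen htconn
      (fun j y _ => hterm2 j y) ?_ hβt ?_ hβt
    · intro j y hy
      rw [norm_neg, norm_mul, Real.norm_eq_abs, Real.norm_eq_abs,
        abs_of_nonneg (pow_nonneg (hΔ j) 2), abs_of_nonneg (Real.exp_pos _).le]
      exact mul_le_mul_of_nonneg_left (hbound j y hy) (pow_nonneg (hΔ j) 2)
    · have := summable_pow_mul_exp Δ hΔ βs hsum 1 one_pos (lt_trans hc1 hc2)
      simpa using this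
  rw [tsum_neg] at hZ hN
  -- Z β > 0
  have hZsum := hsum β hβ
  have hZpos : 0 < ∑' j, Real.exp (-β * Δ j) :=
    Summable.tsum_pos hZsum (fun j => (Real.exp_pos _).le) 0 (Real.exp_pos _)
  have hdiv := hN.div hZ (ne_of_gt hZpos)
  refine hdiv.congr_deriv ?_
  set Z := ∑' j, Real.exp (-β * Δ j)
  set S1 := ∑' j, Δ j * Real.exp (-β * Δ j)
  set S2 := ∑' j, Δ j ^ 2 * Real.exp (-β * Δ j)
  field_simp
  ring
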